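/- Let p ≥ 5 be a prime and let g ≥ 2 be an integer. With C_p(k;x) ∈ ℤ[x] defined by the case table below and G_p(x) := ∏_{s=1}^{g²−g} C_p(2g(g+p) + (g²−g−s)(p−1); x), one has: G_p(x) = 1 if p ≡ 1 (mod 12); G_p(x) = x^{⌈(g²−g)/3⌉} if p ≡ 5 (mod 12); G_p(x) = (x−1728)^{(g²−g)/2} if p ≡ 7 (mod 12); and G_p(x) = x^{⌈(g²−g)/3⌉}(x−1728)^{(g²−g)/2} if p ≡ 11 (mod 12). -/
import Mathlib


open Polynomial Finset

/-- The correction polynomial `C_p(k;x)` of Ahlgren–Ono, defined by cases on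
`(k, p)` modulo 12. -/
noncomputable def Cpoly (p k : ℕ) : Polynomial ℤ :=
  if (k % 12 = 2 ∧ p % 12 = 5) ∨ (k % 12 = 8 ∧ p % 12 = 5) ∨
      (k % 12 = 8 ∧ p % 12 = 11) then X
  else if (k % 12 = 2 ∧ p % 12 = 7) ∨ (k % 12 = 6 ∧ p % 12 = 7) ∨
      (k % 12 = 10 ∧ p % 12 = 7) ∨ (k % 12 = 6 ∧ p % 12 = 11) ∨
      (k % 12 = 10 ∧ p % 12 = 11) then X - C 1728
  else if k % 12 = 2 ∧ p % 12 = 11 then X * (X - C 1728)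
  else 1

/-- The product `G_p(x) = ∏_{s=1}^{g²-g} C_p(2g(g+p) + (g²-g-s)(p-1); x)`. -/
noncomputable def Gpoly (p g : ℕ) : Polynomial ℤ :=
  ∏ s ∈ Finset.Icc 1 (g ^ 2 - g), Cpoly p (2 * g * (g + p) + (g ^ 2 - g - s) * (p - 1))

/-- Residue version of `Cpoly`. -/
noncomputable def Cres (pr kr : ℕ) : Polynomial ℤ :=
  if (kr = 2 ∧ pr = 5) ∨ (kr = 8 ∧ pr = 5) ∨ (kr = 8 ∧ pr = 11) then X
  else if (kr = 2 ∧ pr = 7) ∨ (kr = 6 ∧ pr = 7) ∨ (kr = 10 ∧ pr = 7) ∨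
      (kr = 6 ∧ pr = 11) ∨ (kr = 10 ∧ pr = 11) then X - C 1728
  else if kr = 2 ∧ pr = 11 then X * (X - C 1728)
  else 1

lemma Cpoly_eq_Cres (p k : ℕ) : Cpoly p k = Cres (p % 12) (k % 12) := rfl

lemma prod_periodic {M : Type*} [CommMonoid M] (F : ℕ → M) (c : ℕ)
    (h : ∀ n, F (n + c) = F n) : ∀ q r, ∏ i ∈ Finset.range (c * q + r), F i
      = (∏ i ∈ Finset.range c, F i) ^ q * ∏ i ∈ Finset.range r, F i := by
  intro q
  induction q with
  | zero => simp
  | succ n ih =>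
      intro r
      have e : c * (n + 1) + r = c + (c * n + r) := by ring
      rw [e, Finset.prod_range_add]
      have e2 : ∀ i, F (c + i) = F i := fun i => by rw [Nat.add_comm]; exact h i
      simp only [e2]
      rw [ih r, pow_succ', mul_assoc]

lemma Gpoly_eq (p g : ℕ) :
    Gpoly p g = ∏ t ∈ Finset.range (g ^ 2 - g),
      Cpoly p (2 * g * (g + p) + t * (p - 1)) := by
  unfold Gpoly
  rw [← Finset.Ico_add_one_right_eq_Icc, Finset.prod_Ico_eq_prod_range]
  conv_rhs => rw [← Finset.prod_range_reflect]
  apply Finset.prod_congr rfl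
  intro i _
  have e : g ^ 2 - g - (1 + i) = g ^ 2 - g - 1 - i := by omega
  rw [e]

theorem Gpoly_eval (p g : ℕ) (hp : p.Prime) (hp5 : 5 ≤ p) (hg : 2 ≤ g) :
    (p % 12 = 1 → Gpoly p g = 1) ∧
    (p % 12 = 5 → Gpoly p g = X ^ ((g ^ 2 - g + 2) / 3)) ∧
    (p % 12 = 7 → Gpoly p g = (X - C 1728) ^ ((g ^ 2 - g) / 2)) ∧
    (p % 12 = 11 → Gpoly p g =
      X ^ ((g ^ 2 - g + 2) / 3) * (X - C 1728) ^ ((g ^ 2 - g) / 2)) := by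
  have hodd : p % 2 = 1 := by
    rcases Nat.Prime.eq_two_or_odd hp with h | h
    · omega
    · exact h
  -- N = g^2 - g = g * (g - 1)
  have hNmul : g ^ 2 - g = g * (g - 1) := by
    obtain ⟨n, rfl⟩ : ∃ n, g = n + 1 := ⟨g - 1, by omega⟩
    have e1 : (n + 1) ^ 2 = n * n + 2 * n + 1 := by ring
    have e2 : (n + 1) * ((n + 1) - 1) = n * n + n := by
      rw [Nat.add_sub_cancel]; ring
    omega
  -- periodicity of the factor in t with period 6
  have hper : ∀ t, Cpoly p (2 * g * (g + p) + (t + 6) * (p - 1))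
      = Cpoly p (2 * g * (g + p) + t * (p - 1)) := by
    intro t
    rw [Cpoly_eq_Cres, Cpoly_eq_Cres]
    congr 1
    have e : (t + 6) * (p - 1) = t * (p - 1) + 6 * (p - 1) := by ring
    rw [e]
    generalize t * (p - 1) = x
    generalize 2 * g * (g + p) = a
    omega
  have hGp : Gpoly p g = (∏ t ∈ Finset.range 6,
        Cpoly p (2 * g * (g + p) + t * (p - 1))) ^ ((g ^ 2 - g) / 6)
      * ∏ t ∈ Finset.range ((g ^ 2 - g) % 6),
        Cpoly p (2 * g * (g + p) + t * (p - 1)) := by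
    rw [Gpoly_eq]
    conv_lhs => rw [show g ^ 2 - g = 6 * ((g ^ 2 - g) / 6) + (g ^ 2 - g) % 6 from
      (Nat.div_add_mod _ 6).symm]
    exact prod_periodic (fun t => Cpoly p (2 * g * (g + p) + t * (p - 1))) 6 hper _ _
  -- key rewriting of each factor through residues
  have hkey : ∀ t, Cpoly p (2 * g * (g + p) + t * (p - 1))
      = Cres (p % 12) (((2 * g * (g + p)) % 12 + (t % 12) * ((p - 1) % 12)) % 12) := by
    intro t
    rw [Cpoly_eq_Cres]
    congr 1
    exact (Nat.mod_modEq (2 * g * (g + p)) 12).symm.add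
      ((Nat.mod_modEq t 12).symm.mul (Nat.mod_modEq (p - 1) 12).symm)
  -- residue facts
  have h1 : (2 * g * (g + p)) % 12 = (2 * (g % 12) * (g % 12 + p % 12)) % 12 :=
    ((Nat.ModEq.refl 2).mul (Nat.mod_modEq g 12).symm).mul
      ((Nat.mod_modEq g 12).symm.add (Nat.mod_modEq p 12).symm)
  have h2 : (g ^ 2 - g) % 6 = ((g % 12 % 6) * ((g % 12 % 6 + 5) % 6)) % 6 := by
    rw [hNmul]
    have e1 : g % 6 = g % 12 % 6 := by omega
    have e2 : (g - 1) % 6 = (g % 12 % 6 + 5) % 6 := by omega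
    calc g * (g - 1) % 6 = (g % 6 * ((g - 1) % 6)) % 6 :=
          (Nat.mod_modEq g 6).symm.mul (Nat.mod_modEq (g - 1) 6).symm
      _ = ((g % 12 % 6) * ((g % 12 % 6 + 5) % 6)) % 6 := by rw [← e2, ← e1]
  -- generalize the nonlinear atoms
  obtain ⟨A, hAg⟩ : ∃ A, (2 * g * (g + p)) % 12 = A := ⟨_, rfl⟩
  rw [hAg] at h1 hkey
  obtain ⟨N, hNg⟩ : ∃ N, g ^ 2 - g = N := ⟨_, rfl⟩
  rw [hNg] at hGp h2 ⊢
  refine ⟨?_, ?_, ?_, ?_⟩ <;> intro hP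
  · -- p ≡ 1 (mod 12)
    have hC : ∀ k, Cpoly p k = 1 := by
      intro k
      unfold Cpoly
      rw [hP]
      norm_num
    unfold Gpoly
    exact Finset.prod_eq_one fun s _ => hC _
  · -- p ≡ 5 (mod 12)
    have hp1 : (p - 1) % 12 = 4 := by omega
    have hres : (N % 6 = 0 ∧ A = 0) ∨ (N % 6 = 2 ∧ A = 4) := by
      obtain ⟨u, hu⟩ : ∃ u, g % 12 = u := ⟨_, rfl⟩
      have hul : u < 12 := by omega
      rw [hu, hP] at h1
      rw [hu] at h2
      interval_cases u <;> omega
    simp only [hP, hp1] at hkey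
    rcases hres with ⟨hr, hA⟩ | ⟨hr, hA⟩
    · have hblock : ∏ t ∈ Finset.range 6,
          Cpoly p (2 * g * (g + p) + t * (p - 1)) = X ^ 2 := by
        simp only [hkey, hA]
        rw [Finset.prod_range_succ, Finset.prod_range_succ, Finset.prod_range_succ,
          Finset.prod_range_succ, Finset.prod_range_succ, Finset.prod_range_one]
        norm_num [Cres]
        ring
      rw [hGp, hblock, hr]
      simp only [Finset.range_zero, Finset.prod_empty, mul_one]
      rw [show (N + 2) / 3 = 2 * (N / 6) from by omega, pow_mul]
    · have hblock : ∏ t ∈ Finset.range 6,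
          Cpoly p (2 * g * (g + p) + t * (p - 1)) = X ^ 2 := by
        simp only [hkey, hA]
        rw [Finset.prod_range_succ, Finset.prod_range_succ, Finset.prod_range_succ,
          Finset.prod_range_succ, Finset.prod_range_succ, Finset.prod_range_one]
        norm_num [Cres]
        ring
      have hrem : ∏ t ∈ Finset.range 2,
          Cpoly p (2 * g * (g + p) + t * (p - 1)) = X := by
        simp only [hkey, hA]
        rw [Finset.prod_range_succ, Finset.prod_range_one]
        norm_num [Cres]
      rw [hGp, hblock, hr, hrem]
      rw [show (N + 2) / 3 = 2 * (N / 6) + 1 from by omega]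
      conv_rhs => rw [pow_succ, pow_mul]
  · -- p ≡ 7 (mod 12)
    have hp1 : (p - 1) % 12 = 6 := by omega
    have hres : (N % 6 = 0 ∨ N % 6 = 2) ∧ (A = 0 ∨ A = 4) := by
      obtain ⟨u, hu⟩ : ∃ u, g % 12 = u := ⟨_, rfl⟩
      have hul : u < 12 := by omega
      rw [hu, hP] at h1
      rw [hu] at h2
      interval_cases u <;> omega
    simp only [hP, hp1] at hkey
    have hblock : ∏ t ∈ Finset.range 6,
        Cpoly p (2 * g * (g + p) + t * (p - 1)) = (X - C 1728) ^ 3 := by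
      rcases hres.2 with hA | hA <;>
      · simp only [hkey, hA]
        rw [Finset.prod_range_succ, Finset.prod_range_succ, Finset.prod_range_succ,
          Finset.prod_range_succ, Finset.prod_range_succ, Finset.prod_range_one]
        norm_num [Cres]
        ring
    rcases hres.1 with hr | hr
    · rw [hGp, hblock, hr]
      simp only [Finset.range_zero, Finset.prod_empty, mul_one]
      rw [show N / 2 = 3 * (N / 6) from by omega, pow_mul]
    · have hrem : ∏ t ∈ Finset.range 2,
          Cpoly p (2 * g * (g + p) + t * (p - 1)) = X - C 1728 := by
        rcases hres.2 with hA | hA <;>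
        · simp only [hkey, hA]
          rw [Finset.prod_range_succ, Finset.prod_range_one]
          norm_num [Cres]
      rw [hGp, hblock, hr, hrem]
      rw [show N / 2 = 3 * (N / 6) + 1 from by omega]
      conv_rhs => rw [pow_succ, pow_mul]
  · -- p ≡ 11 (mod 12)
    have hp1 : (p - 1) % 12 = 10 := by omega
    have hres : (N % 6 = 0 ∧ A = 0) ∨ (N % 6 = 2 ∧ A = 4) := by
      obtain ⟨u, hu⟩ : ∃ u, g % 12 = u := ⟨_, rfl⟩
      have hul : u < 12 := by omega
      rw [hu, hP] at h1
      rw [hu] at h2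
      interval_cases u <;> omega
    simp only [hP, hp1] at hkey
    rcases hres with ⟨hr, hA⟩ | ⟨hr, hA⟩
    · have hblock : ∏ t ∈ Finset.range 6,
          Cpoly p (2 * g * (g + p) + t * (p - 1)) = X ^ 2 * (X - C 1728) ^ 3 := by
        simp only [hkey, hA]
        rw [Finset.prod_range_succ, Finset.prod_range_succ, Finset.prod_range_succ,
          Finset.prod_range_succ, Finset.prod_range_succ, Finset.prod_range_one]
        norm_num [Cres]
        ring
      rw [hGp, hblock, hr]
      simp only [Finset.range_zero, Finset.prod_empty, mul_one]
      rw [show (N + 2) / 3 = 2 * (N / 6) from by omega,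
        show N / 2 = 3 * (N / 6) from by omega, mul_pow, pow_mul, pow_mul]
    · have hblock : ∏ t ∈ Finset.range 6,
          Cpoly p (2 * g * (g + p) + t * (p - 1)) = X ^ 2 * (X - C 1728) ^ 3 := by
        simp only [hkey, hA]
        rw [Finset.prod_range_succ, Finset.prod_range_succ, Finset.prod_range_succ,
          Finset.prod_range_succ, Finset.prod_range_succ, Finset.prod_range_one]
        norm_num [Cres]
        ring
      have hrem : ∏ t ∈ Finset.range 2,
          Cpoly p (2 * g * (g + p) + t * (p - 1)) = X * (X - C 1728) := by
        simp only [hkey, hA]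
        rw [Finset.prod_range_succ, Finset.prod_range_one]
        norm_num [Cres]
      rw [hGp, hblock, hr, hrem]
      rw [show (N + 2) / 3 = 2 * (N / 6) + 1 from by omega,
        show N / 2 = 3 * (N / 6) + 1 from by omega]
      conv_rhs => rw [pow_succ, pow_succ, pow_mul, pow_mul]
      conv_lhs => rw [mul_pow]
      ring
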